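/- Let f: M → M be a conformally symplectic diffeomorphism with f*Ω = λΩ, |λ| ≠ 1, and let K: T^d → M be an embedding satisfying f ∘ K = K ∘ T_ω. Then K*Ω = 0, i.e., the invariant torus is isotropic. -/

import Mathlib

/-- An invariant rotational torus of a conformally symplectic map `f` (`f*Ω = λ Ω`,
`|λ| ≠ 1`) is isotropic: the pullback `K*Ω` vanishes.  The torus is parameterized by a
`ℤ^d`-periodic `C¹` embedding `K : ℝ^d → E` satisfying `f ∘ K = K ∘ T_ω`. -/
theorem invariant_torus_isotropic
    {E : Type*} [NormedAddCommGroup E] [NormedSpace ℝ E] {d : ℕ}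
    (Ω : E → (E →L[ℝ] E →L[ℝ] ℝ)) (hΩ : Continuous Ω)
    (f : E → E) (hf : Differentiable ℝ f)
    (lam : ℝ) (hlam : |lam| ≠ 1)
    (hconf : ∀ x : E, ∀ u v : E,
      Ω (f x) (fderiv ℝ f x u) (fderiv ℝ f x v) = lam * Ω x u v)
    (ω : Fin d → ℝ)
    (K : (Fin d → ℝ) → E) (hK : ContDiff ℝ 1 K)
    (hper : ∀ θ (k : Fin d → ℤ), K (θ + fun i => (k i : ℝ)) = K θ)
    (hemb : ∀ θ θ', K θ = K θ' → ∃ k : Fin d → ℤ, θ' = θ + fun i => (k i : ℝ))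
    (hinv : ∀ θ, f (K θ) = K (θ + ω)) :
    ∀ θ u v, Ω (K θ) (fderiv ℝ K θ u) (fderiv ℝ K θ v) = 0 := by
  intro θ u v
  have hKd : Differentiable ℝ K := hK.differentiable one_ne_zero
  -- derivative of a shift
  have hshift : ∀ (c s : Fin d → ℝ), fderiv ℝ (fun t => K (t + c)) s = fderiv ℝ K (s + c) := by
    intro c s
    have h1 : HasFDerivAt (fun t : Fin d → ℝ => t + c)
        (ContinuousLinearMap.id ℝ (Fin d → ℝ)) s := (hasFDerivAt_id s).add_const c
    have h2 := ((hKd (s + c)).hasFDerivAt.comp s h1)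
    simpa [Function.comp_def] using h2.fderiv
  -- the pullback form evaluated at fixed vectors u v
  set g : (Fin d → ℝ) → ℝ := fun s => Ω (K s) (fderiv ℝ K s u) (fderiv ℝ K s v) with hg_def
  -- chain rule from the invariance equation
  have hchain : ∀ s, fderiv ℝ K (s + ω) = (fderiv ℝ f (K s)).comp (fderiv ℝ K s) := by
    intro s
    have heq : (fun t => f (K t)) = fun t => K (t + ω) := funext hinv
    have h1 : fderiv ℝ (fun t => f (K t)) s = (fderiv ℝ f (K s)).comp (fderiv ℝ K s) :=
      fderiv_comp s (hf (K s)) (hKd s)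
    rw [heq, hshift] at h1
    exact h1
  have hgω : ∀ s, g (s + ω) = lam * g s := by
    intro s
    simp only [hg_def]
    rw [hchain s, ← hinv s]
    simpa using hconf (K s) (fderiv ℝ K s u) (fderiv ℝ K s v)
  -- periodicity of g
  have hgper : ∀ s (k : Fin d → ℤ), g (s + fun i => (k i : ℝ)) = g s := by
    intro s k
    have hKeq : (fun t => K (t + fun i => (k i : ℝ))) = K := funext fun t => hper t k
    have := hshift (fun i => (k i : ℝ)) s
    rw [hKeq] at this
    simp only [hg_def, hper s k, ← this]
  -- g is continuous
  have hfd : Continuous (fderiv ℝ K) := hK.continuous_fderiv one_ne_zero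
  have hg : Continuous g := by
    rw [hg_def]
    exact ((hΩ.comp hK.continuous).clm_apply
      (hfd.clm_apply continuous_const)).clm_apply (hfd.clm_apply continuous_const)
  -- g is bounded
  obtain ⟨M, hM⟩ : ∃ M, ∀ s, |g s| ≤ M := by
    obtain ⟨C, hC⟩ := (isCompact_Icc (a := (0 : Fin d → ℝ)) (b := 1)).exists_bound_of_continuousOn
      hg.continuousOn
    refine ⟨C, fun s => ?_⟩
    have hfrac : (s + fun i => ((-⌊s i⌋ : ℤ) : ℝ)) ∈ Set.Icc (0 : Fin d → ℝ) 1 := by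
      constructor <;> intro i <;>
        simp only [Pi.add_apply, Pi.zero_apply, Pi.one_apply, Int.cast_neg] <;>
        [skip; skip] <;>
        · have h0 := Int.floor_le (s i)
          have h1 := Int.lt_floor_add_one (s i)
          linarith
    have := hC _ hfrac
    rw [hgper s (fun i => -⌊s i⌋)] at this
    simpa using this
  -- iteration forward and backward
  have hfwd : ∀ (n : ℕ) s, g (s + n • ω) = lam ^ n * g s := by
    intro n
    induction n with
    | zero => intro s; simp
    | succ n ih =>
      intro s
      have : s + (n + 1) • ω = (s + n • ω) + ω := by
        rw [succ_nsmul, add_assoc]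
      rw [this, hgω, ih, pow_succ]
      ring
  have hbwd : ∀ (n : ℕ) s, g s = lam ^ n * g (s - n • ω) := by
    intro n
    induction n with
    | zero => intro s; simp
    | succ n ih =>
      intro s
      have h1 : g s = lam * g (s - ω) := by
        have := hgω (s - ω); rw [sub_add_cancel] at this; exact this
      rw [h1, ih (s - ω), pow_succ]
      have : s - ω - n • ω = s - (n + 1) • ω := by
        rw [succ_nsmul]; abel
      rw [this]; ring
  -- conclude g θ = 0
  show g θ = 0
  by_contra hne
  have habs : 0 < |g θ| := abs_pos.mpr hne
  have hMpos : 0 < M := lt_of_lt_of_le habs (hM θ)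
  rcases hlam.lt_or_gt with h1 | h1
  · -- |lam| < 1 : use backward iteration
    obtain ⟨n, hn⟩ := exists_pow_lt_of_lt_one (div_pos habs hMpos) h1
    have : |g θ| = |lam| ^ n * |g (θ - n • ω)| := by
      rw [hbwd n θ, abs_mul, abs_pow]
    have hlt : |g θ| < |g θ| := by
      calc |g θ| = |lam| ^ n * |g (θ - n • ω)| := this
        _ ≤ |lam| ^ n * M := by
            exact mul_le_mul_of_nonneg_left (hM _) (pow_nonneg (abs_nonneg _) n)
        _ < (|g θ| / M) * M := by
            exact mul_lt_mul_of_pos_right hn hMpos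
        _ = |g θ| := div_mul_cancel₀ _ hMpos.ne'
    exact absurd hlt (lt_irrefl _)
  · -- 1 < |lam| : use forward iteration
    obtain ⟨n, hn⟩ := pow_unbounded_of_one_lt (M / |g θ|) h1
    have h2 : |g (θ + n • ω)| = |lam| ^ n * |g θ| := by
      rw [hfwd n θ, abs_mul, abs_pow]
    have hlt : M < M := by
      calc M = (M / |g θ|) * |g θ| := (div_mul_cancel₀ _ habs.ne').symm
        _ < |lam| ^ n * |g θ| := mul_lt_mul_of_pos_right hn habs
        _ = |g (θ + n • ω)| := h2.symm
        _ ≤ M := hM _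
    exact absurd hlt (lt_irrefl _)
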